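/- Even/odd power structure of the interaction generator: Let S be a finite nonempty index set, N ≥ 1, and work on ℂ^{1+|S|} ⊗ ℂ^N with orthonormal ancilla basis {e_0} ∪ {e_α : α ∈ S}. Given matrices G_α ∈ ℂ^{N×N}, define Ω := Σ_{α∈S} ( e_α e_0† ⊗ G_α − e_0 e_α† ⊗ G_α† ) and R² := Σ_{α∈S} G_α† G_α. Then for every integer q ≥ 0 and every ψ ∈ ℂ^N: Ω^{2q} (e_0 ⊗ ψ) = (−1)^q · e_0 ⊗ ( (R²)^q ψ ) and Ω^{2q+1} (e_0 ⊗ ψ) = (−1)^q · Σ_{α∈S} e_α ⊗ ( G_α (R²)^q ψ ). -/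

import Mathlib

open Matrix Kronecker

/-- The interaction generator
`Ω := Σ_{α∈S} (e_α e_0† ⊗ G_α − e_0 e_α† ⊗ G_α†)` on the ancilla space with basis
`{e_0} ∪ {e_α : α ∈ S}` (index type `Option S`, with `none` playing the role of `e_0`). -/
noncomputable def repIntGen {S : Type*} [Fintype S] [DecidableEq S] {N : ℕ}
    (G : S → Matrix (Fin N) (Fin N) ℂ) :
    Matrix (Option S × Fin N) (Option S × Fin N) ℂ :=
  ∑ α : S,
    (Matrix.single (some α) (none : Option S) (1 : ℂ) ⊗ₖ G α -
      Matrix.single (none : Option S) (some α) (1 : ℂ) ⊗ₖ (G α)ᴴ)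

/-- `R² := Σ_{α∈S} G_α† G_α`. -/
noncomputable def repIntR2 {S : Type*} [Fintype S] {N : ℕ}
    (G : S → Matrix (Fin N) (Fin N) ℂ) : Matrix (Fin N) (Fin N) ℂ :=
  ∑ α : S, (G α)ᴴ * G α

/-- The embedding `e_0 ⊗ ψ` of a system vector into the dilated space. -/
def e0Embed {S : Type*} {N : ℕ} (ψ : Fin N → ℂ) : Option S × Fin N → ℂ :=
  fun p => match p.1 with
    | none => ψ p.2
    | some _ => 0

/-- The vector `Σ_{α∈S} e_α ⊗ (φ α)` with no `e_0` component. -/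
def excitedEmbed {S : Type*} {N : ℕ} (φ : S → Fin N → ℂ) : Option S × Fin N → ℂ :=
  fun p => match p.1 with
    | none => 0
    | some α => φ α p.2

lemma step1 {S : Type*} [Fintype S] [DecidableEq S] {N : ℕ}
    (G : S → Matrix (Fin N) (Fin N) ℂ) (ψ : Fin N → ℂ) :
    repIntGen G *ᵥ e0Embed ψ = excitedEmbed (fun α => G α *ᵥ ψ) := by
  funext p
  obtain ⟨x, i⟩ := p
  simp only [repIntGen, mulVec, dotProduct, Fintype.sum_prod_type, Fintype.sum_option,
    e0Embed, excitedEmbed, Matrix.sum_apply, Matrix.sub_apply, kroneckerMap_apply, Matrix.single,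
    of_apply, mul_zero, Finset.sum_const_zero, add_zero, mul_one]
  cases x with
  | none => simp [mulVec, dotProduct]
  | some β =>
    simp only [reduceCtorEq, and_false, false_and, if_false, Option.some.injEq, mulVec,
      dotProduct, zero_mul, mul_zero, Finset.sum_const_zero, zero_sub, neg_zero, zero_add]
    congr 1
    funext j
    simp [ite_mul, Finset.sum_ite_eq' Finset.univ β (fun a => G a i j)]

lemma step2 {S : Type*} [Fintype S] [DecidableEq S] {N : ℕ}
    (G : S → Matrix (Fin N) (Fin N) ℂ) (φ : S → Fin N → ℂ) :
    repIntGen G *ᵥ excitedEmbed φ = - e0Embed (fun i => ∑ α, ((G α)ᴴ *ᵥ φ α) i) := by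
  funext p
  obtain ⟨x, i⟩ := p
  simp only [repIntGen, mulVec, dotProduct, Fintype.sum_prod_type, Fintype.sum_option,
    e0Embed, excitedEmbed, Matrix.sum_apply, Matrix.sub_apply, kroneckerMap_apply, Matrix.single,
    of_apply, mul_zero, Finset.sum_const_zero, add_zero, mul_one, Pi.neg_apply]
  cases x with
  | none =>
    simp only [reduceCtorEq, false_and, if_false, zero_mul, mul_zero,
      Finset.sum_const_zero, zero_sub, zero_add, mulVec, dotProduct]
    rw [Finset.sum_comm]
    simp [Finset.mul_sum, conjTranspose_apply]
    rw [Finset.sum_comm]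
  | some β =>
    simp [mulVec, dotProduct]

lemma sum_mulVec' {ι N' : Type*} [Fintype N'] [DecidableEq N'] [DecidableEq ι]
    (s : Finset ι) (f : ι → Matrix N' N' ℂ) (v : N' → ℂ) :
    (∑ i ∈ s, f i) *ᵥ v = ∑ i ∈ s, f i *ᵥ v := by
  induction s using Finset.induction with
  | empty => simp
  | insert a s h ih => rw [Finset.sum_insert h, Finset.sum_insert h, add_mulVec, ih]

lemma stepR2 {S : Type*} [Fintype S] [DecidableEq S] {N : ℕ}
    (G : S → Matrix (Fin N) (Fin N) ℂ) (ψ : Fin N → ℂ) :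
    (repIntGen G ^ 2) *ᵥ e0Embed ψ = - e0Embed (repIntR2 G *ᵥ ψ) := by
  rw [pow_two, ← mulVec_mulVec, step1, step2]
  have hv : (fun i => ∑ α, ((G α)ᴴ *ᵥ (G α *ᵥ ψ)) i) = repIntR2 G *ᵥ ψ := by
    funext i
    rw [repIntR2, sum_mulVec']
    simp [mulVec_mulVec]
  rw [hv]

/-- **Even/odd power structure of the interaction generator.**
`Ω^{2q}(e_0 ⊗ ψ) = (−1)^q e_0 ⊗ ((R²)^q ψ)` and
`Ω^{2q+1}(e_0 ⊗ ψ) = (−1)^q Σ_α e_α ⊗ (G_α (R²)^q ψ)`. -/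
theorem interaction_generator_powers {S : Type*} [Fintype S] [DecidableEq S] [Nonempty S]
    (N : ℕ) (hN : 1 ≤ N) (G : S → Matrix (Fin N) (Fin N) ℂ) (q : ℕ) (ψ : Fin N → ℂ) :
    (repIntGen G ^ (2 * q)) *ᵥ e0Embed ψ =
      ((-1 : ℂ) ^ q) • e0Embed ((repIntR2 G ^ q) *ᵥ ψ) ∧
    (repIntGen G ^ (2 * q + 1)) *ᵥ e0Embed ψ =
      ((-1 : ℂ) ^ q) • excitedEmbed (fun α => (G α * repIntR2 G ^ q) *ᵥ ψ) := by
  have even : ∀ (q : ℕ) (ψ : Fin N → ℂ),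
      (repIntGen G ^ (2 * q)) *ᵥ e0Embed ψ =
        ((-1 : ℂ) ^ q) • e0Embed ((repIntR2 G ^ q) *ᵥ ψ) := by
    intro q
    induction q with
    | zero => intro ψ; simp
    | succ q ih =>
      intro ψ
      rw [show 2 * (q + 1) = 2 * q + 2 by ring, pow_add, ← mulVec_mulVec, stepR2,
        mulVec_neg, ih, mulVec_mulVec, ← pow_succ]
      simp [pow_succ, mul_smul]
  refine ⟨even q ψ, ?_⟩
  rw [pow_succ', ← mulVec_mulVec, even q ψ, mulVec_smul, step1]
  have hf : (fun α => G α *ᵥ (repIntR2 G ^ q *ᵥ ψ)) =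
      fun α => (G α * repIntR2 G ^ q) *ᵥ ψ := funext fun α => mulVec_mulVec ..
  rw [hf]
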